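/- Fix k ≥ 1. For all sufficiently large m and every even s with 1 ≤ s ≤ 2k, one has W_m(s) ≤ [0; (1_{2k−1}, 2)^{m+1}] + [\overline{2; 1_{2k−1}}]; that is, the maximum of W_m(s) over even s is attained at the value corresponding to s = 2k. -/
import Mathlib


open Filter Real

/-- Distance from a real number to the nearest integer. -/
noncomputable def intDist (ξ : ℝ) : ℝ := |ξ - round ξ|

/-- Irrationality measure function `ψ_α(t) = min {‖qα‖ : q ∈ ℤ, 1 ≤ q ≤ t}`. -/
noncomputable def psi (α : ℝ) (t : ℝ) : ℝ :=
  sInf {x : ℝ | ∃ q : ℤ, 1 ≤ q ∧ (q : ℝ) ≤ t ∧ x = intDist ((q : ℝ) * α)}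

/-- `f₀(x) = (√5 + 1)/(√5 + √(5 - 4/x²))`. -/
noncomputable def f0 (x : ℝ) : ℝ :=
  (Real.sqrt 5 + 1) / (Real.sqrt 5 + Real.sqrt (5 - 4 / x ^ 2))

/-- Value of a finite regular continued fraction `[a₀; a₁, …, aₙ]`. -/
noncomputable def cfVal : List ℤ → ℝ
  | [] => 0
  | [a] => (a : ℝ)
  | a :: b :: l => (a : ℝ) + 1 / cfVal (b :: l)

/-- The list `[a 0, a 1, …, a n]`. -/
def cfList (a : ℕ → ℤ) (n : ℕ) : List ℤ := (List.range (n + 1)).map a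

/-- `α` is the value of the infinite continued fraction with partial quotients `a`,
i.e. the convergents `[a₀; a₁, …, aₙ]` tend to `α`. -/
def IsCFExp (a : ℕ → ℤ) (α : ℝ) : Prop :=
  Filter.Tendsto (fun n => cfVal (cfList a n)) Filter.atTop (nhds α)

/-- Denominators `q_n` of the convergents of the continued fraction with
partial quotients `a` : `q₀ = 1`, `q₁ = a₁`, `q_{n+2} = a_{n+2} q_{n+1} + q_n`. -/
def cfDen (a : ℕ → ℤ) : ℕ → ℤ
  | 0 => 1
  | 1 => a 1
  | n + 2 => a (n + 2) * cfDen a (n + 1) + cfDen a n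

/-- Partial quotients of `α_k = [overline{1_{2k-1}, 2}]` (for `k = 0` this gives
the all-ones sequence, the expansion of the golden ratio `α₀ = φ`). -/
def aSeq (k : ℕ) (n : ℕ) : ℤ := if (n + 1) % (2 * k) = 0 then 2 else 1

/-- Partial quotients of `β_k = [0; 1_{k-1}, overline{2, 1_{2k-1}}]`. -/
def bSeq (k : ℕ) (n : ℕ) : ℤ :=
  if n = 0 then 0 else if n < k then 1 else if (n - k) % (2 * k) = 0 then 2 else 1

/-- Partial quotients of `β_k^{(1)} = [0; 1_k, overline{2, 1_{2k-1}}]`. -/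
def b1Seq (k : ℕ) (n : ℕ) : ℤ :=
  if n = 0 then 0 else if n < k + 1 then 1
  else if (n - (k + 1)) % (2 * k) = 0 then 2 else 1

/-- Partial quotients of `β_k^{(2)} = [0; 1_{k-2}, overline{2, 1_{2k-1}}]`. -/
def b2Seq (k : ℕ) (n : ℕ) : ℤ :=
  if n = 0 then 0 else if n < k - 1 then 1
  else if (n - (k - 1)) % (2 * k) = 0 then 2 else 1

/-- `D_k = (2α_k + 1)/(2α_k + 2)` as a function of `α_k`. -/
noncomputable def Dk (αk : ℝ) : ℝ := (2 * αk + 1) / (2 * αk + 2)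

/-- `g_k(x) = 2D_k/(1 + √(1 - 4D_k(1-D_k)/x²))` as a function of `α_k`. -/
noncomputable def gFun (αk : ℝ) (x : ℝ) : ℝ :=
  2 * Dk αk / (1 + Real.sqrt (1 - 4 * Dk αk * (1 - Dk αk) / x ^ 2))

/-- `f_k` for odd `k`, as a function of `α_k` and `β_k`. -/
noncomputable def fOdd (αk βk : ℝ) (x : ℝ) : ℝ :=
  2 * Dk αk / (1 + Real.sqrt (1 - 2 * αk / ((2 * βk + 1) * (αk + 1) * x ^ 2)))

/-- `f_k` for even `k`, as a function of `α_k`, `β_k^{(1)}` and `β_k^{(2)}`. -/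
noncomputable def fEven (αk β1 β2 : ℝ) (x : ℝ) : ℝ :=
  2 * Dk αk / (1 + Real.sqrt (1 - 2 * αk / ((β1 + β2 + 1) * (αk + 1) * x ^ 2)))

/-- The block `(1_{2k-1}, 2)` of partial quotients. -/
def block (k : ℕ) : List ℤ := List.replicate (2 * k - 1) 1 ++ [2]

/-- `m` repetitions of the block `(1_{2k-1}, 2)`. -/
def blocks (k : ℕ) : ℕ → List ℤ
  | 0 => []
  | m + 1 => block k ++ blocks k m

/-- Partial quotients of the finite continued fraction `[0; 1_{s-1}, 2, (1_{2k-1}, 2)^m]`. -/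
def wFin (k m s : ℕ) : List ℤ := 0 :: (List.replicate (s - 1) 1 ++ [2] ++ blocks k m)

/-- Partial quotients of `[1; 1_{2k-s-1}, overline{2, 1_{2k-1}}]` (for `1 ≤ s ≤ 2k-1`). -/
def wSeq (k s : ℕ) (n : ℕ) : ℤ :=
  if n = 0 then 1
  else if n < 2 * k - s then 1
  else if (n - (2 * k - s)) % (2 * k) = 0 then 2 else 1

/-- Partial quotients of `γ = [overline{2, 1_{2k-1}}]`. -/
def gSeq (k : ℕ) (n : ℕ) : ℤ := if n % (2 * k) = 0 then 2 else 1

/-- Partial quotients of the finite continued fraction `[0; (1_{2k-1}, 2)^{m+1}]`. -/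
def topFin (k m : ℕ) : List ℤ := 0 :: blocks k (m + 1)

/-- Partial quotients of `1/α_k = [0; overline{1_{2k-1}, 2}]`. -/
def invSeq (k : ℕ) (n : ℕ) : ℤ := if n = 0 then 0 else if n % (2 * k) = 0 then 2 else 1

lemma cfVal_single (a : ℤ) : cfVal [a] = (a : ℝ) := rfl

lemma cfVal_cons (a b : ℤ) (l : List ℤ) :
    cfVal (a :: b :: l) = (a : ℝ) + 1 / cfVal (b :: l) := rfl

lemma cfVal_bounds : ∀ (l : List ℤ), (∀ x ∈ l, x = 1 ∨ x = 2) → l ≠ [] →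
    1 ≤ cfVal l ∧ cfVal l ≤ 3
  | [], _, hne => absurd rfl hne
  | [a], h, _ => by
      rcases h a (by simp) with rfl | rfl <;> norm_num [cfVal_single]
  | a :: b :: l, h, _ => by
      obtain ⟨h1, h3⟩ := cfVal_bounds (b :: l)
        (fun x hx => h x (List.mem_cons_of_mem _ hx)) (by simp)
      have hpos : (0:ℝ) < cfVal (b :: l) := by linarith
      have hu : 1 / cfVal (b :: l) ≤ 1 := by rw [div_le_one hpos]; exact h1
      have hl : (1:ℝ)/3 ≤ 1 / cfVal (b :: l) := by
        rw [div_le_div_iff₀ (by norm_num) hpos]; linarith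
      rw [cfVal_cons]
      rcases h a (by simp) with rfl | rfl <;> constructor <;> push_cast <;> linarith

lemma cfVal_cons_bounds (a : ℤ) (t : List ℤ) (ht : t ≠ [])
    (h : ∀ x ∈ t, x = 1 ∨ x = 2) :
    (a:ℝ) + 1/3 ≤ cfVal (a :: t) ∧ cfVal (a :: t) ≤ (a:ℝ) + 1 := by
  obtain ⟨b, l, rfl⟩ := List.exists_cons_of_ne_nil ht
  obtain ⟨h1, h3⟩ := cfVal_bounds (b :: l) h (by simp)
  have hpos : (0:ℝ) < cfVal (b :: l) := by linarith
  rw [cfVal_cons]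
  constructor
  · have : (1:ℝ)/3 ≤ 1 / cfVal (b :: l) := by
      rw [div_le_div_iff₀ (by norm_num) hpos]; linarith
    linarith
  · have : 1 / cfVal (b :: l) ≤ 1 := by rw [div_le_one hpos]; exact h1
    linarith

lemma cfList_succ_eq (a : ℕ → ℤ) (j : ℕ) :
    cfList a (j + 1) = a 0 :: (List.range (j + 1)).map (fun i => a (i + 1)) := by
  show (List.range (j + 2)).map a = _
  rw [List.range_succ_eq_map, List.map_cons, List.map_map]
  rfl

lemma cfList_two_eq (a : ℕ → ℤ) (j : ℕ) :
    cfList a (j + 2) = a 0 :: a 1 :: (List.range (j + 1)).map (fun i => a (i + 2)) := by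
  show (List.range (j + 3)).map a = _
  rw [List.range_succ_eq_map, List.range_succ_eq_map, List.map_cons, List.map_map,
    List.map_cons, List.map_map]
  rfl

lemma wSeq_mem (k s n : ℕ) : wSeq k s n = 1 ∨ wSeq k s n = 2 := by
  unfold wSeq; split_ifs <;> simp

lemma gSeq_mem (k n : ℕ) : gSeq k n = 1 ∨ gSeq k n = 2 := by
  unfold gSeq; split_ifs <;> simp

lemma block_mem {k : ℕ} {x : ℤ} (hx : x ∈ block k) : x = 1 ∨ x = 2 := by
  simp [block, List.mem_append, List.mem_replicate] at hx
  tauto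

lemma blocks_mem {k : ℕ} : ∀ {m : ℕ} {x : ℤ}, x ∈ blocks k m → x = 1 ∨ x = 2
  | 0, x, hx => by simp [blocks] at hx
  | m + 1, x, hx => by
      rw [blocks, List.mem_append] at hx
      rcases hx with hx | hx
      · exact block_mem hx
      · exact blocks_mem hx

lemma w_conv_le (k s : ℕ) (hks : 2 ≤ 2 * k - s) :
    ∀ n, 2 ≤ n → cfVal (cfList (wSeq k s) n) ≤ 7/4 := by
  intro n hn
  obtain ⟨j, rfl⟩ : ∃ j, n = j + 2 := ⟨n - 2, by omega⟩
  rw [cfList_two_eq]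
  have h0 : wSeq k s 0 = 1 := by simp [wSeq]
  have h1 : wSeq k s 1 = 1 := by
    unfold wSeq
    rw [if_neg (by norm_num), if_pos (by omega)]
  rw [h0, h1]
  set t := (List.range (j + 1)).map (fun i => wSeq k s (i + 2)) with ht
  have htne : t ≠ [] := by simp [ht]
  have hmem : ∀ x ∈ t, x = 1 ∨ x = 2 := by
    intro x hx
    rw [ht, List.mem_map] at hx
    obtain ⟨i, -, rfl⟩ := hx
    exact wSeq_mem k s (i + 2)
  obtain ⟨hL, hU⟩ := cfVal_cons_bounds 1 t htne hmem
  push_cast at hL hU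
  have hpos : (0:ℝ) < cfVal (1 :: t) := by linarith
  rw [cfVal_cons]
  have : 1 / cfVal (1 :: t) ≤ 3/4 := by rw [div_le_iff₀ hpos]; linarith
  push_cast; linarith

lemma g_conv_ge (k : ℕ) : ∀ n, 1 ≤ n → 7/3 ≤ cfVal (cfList (gSeq k) n) := by
  intro n hn
  obtain ⟨j, rfl⟩ : ∃ j, n = j + 1 := ⟨n - 1, by omega⟩
  rw [cfList_succ_eq]
  have h0 : gSeq k 0 = 2 := by simp [gSeq]
  rw [h0]
  set t := (List.range (j + 1)).map (fun i => gSeq k (i + 1)) with ht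
  have htne : t ≠ [] := by simp [ht]
  have hmem : ∀ x ∈ t, x = 1 ∨ x = 2 := by
    intro x hx
    rw [ht, List.mem_map] at hx
    obtain ⟨i, -, rfl⟩ := hx
    exact gSeq_mem k (i + 1)
  obtain ⟨hL, -⟩ := cfVal_cons_bounds 2 t htne hmem
  push_cast at hL; linarith

lemma wFin_le (k m s : ℕ) (hs : 2 ≤ s) : cfVal (wFin k m s) ≤ 3/4 := by
  have hrep : List.replicate (s - 1) (1:ℤ) = 1 :: List.replicate (s - 2) 1 := by
    have h : s - 1 = (s - 2) + 1 := by omega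
    rw [h, List.replicate_succ]
  have hsh : wFin k m s = 0 :: 1 :: (List.replicate (s - 2) 1 ++ [2] ++ blocks k m) := by
    rw [wFin, hrep]; simp
  rw [hsh]
  set t := List.replicate (s - 2) (1:ℤ) ++ [2] ++ blocks k m with ht
  have htne : t ≠ [] := by simp [ht]
  have hmem : ∀ x ∈ t, x = 1 ∨ x = 2 := by
    intro x hx
    rw [ht, List.mem_append, List.mem_append] at hx
    rcases hx with (hx | hx) | hx
    · exact Or.inl (List.eq_of_mem_replicate hx)
    · exact Or.inr (by simpa using hx)
    · exact blocks_mem hx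
  obtain ⟨hL, -⟩ := cfVal_cons_bounds 1 t htne hmem
  push_cast at hL
  have hpos : (0:ℝ) < cfVal (1 :: t) := by linarith
  rw [cfVal_cons]
  have : 1 / cfVal (1 :: t) ≤ 3/4 := by rw [div_le_iff₀ hpos]; linarith
  push_cast; linarith

lemma topFin_ge (k m : ℕ) (hk : 1 ≤ k) : 1/2 ≤ cfVal (topFin k m) := by
  have hrep : List.replicate (2 * k - 1) (1:ℤ) = 1 :: List.replicate (2 * k - 2) 1 := by
    have h : 2 * k - 1 = (2 * k - 2) + 1 := by omega
    rw [h, List.replicate_succ]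
  have hsh : topFin k m = 0 :: 1 :: (List.replicate (2 * k - 2) 1 ++ [2] ++ blocks k m) := by
    rw [topFin, blocks, block, hrep]; simp
  rw [hsh]
  set t := List.replicate (2 * k - 2) (1:ℤ) ++ [2] ++ blocks k m with ht
  have htne : t ≠ [] := by simp [ht]
  have hmem : ∀ x ∈ t, x = 1 ∨ x = 2 := by
    intro x hx
    rw [ht, List.mem_append, List.mem_append] at hx
    rcases hx with (hx | hx) | hx
    · exact Or.inl (List.eq_of_mem_replicate hx)
    · exact Or.inr (by simpa using hx)
    · exact blocks_mem hx
  obtain ⟨hL, hU⟩ := cfVal_cons_bounds 1 t htne hmem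
  push_cast at hL hU
  have hpos : (0:ℝ) < cfVal (1 :: t) := by linarith
  rw [cfVal_cons]
  have : (1:ℝ)/2 ≤ 1 / cfVal (1 :: t) := by rw [div_le_div_iff₀ (by norm_num) hpos]; linarith
  push_cast; linarith


/-- Lemma 5, even `s`. Fix `k ≥ 1` and let
`W_m(s) = [0; 1_{s−1}, 2, (1_{2k−1}, 2)^m] + [1; 1_{2k−s−1}, overline{2, 1_{2k−1}}]`
for `1 ≤ s ≤ 2k−1` (the second, infinite, summand being `w s`), while
`W_m(2k) = [0; (1_{2k−1}, 2)^{m+1}] + [overline{2, 1_{2k−1}}]` (with `γ` the purely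
periodic second summand). For all sufficiently large `m` and every even `1 ≤ s ≤ 2k`,
one has `W_m(s) ≤ W_m(2k)`. -/
theorem dirichlet_discrete_stmt12 (k : ℕ) (hk : 1 ≤ k) (w : ℕ → ℝ)
    (hw : ∀ s, 1 ≤ s → s ≤ 2 * k - 1 → IsCFExp (wSeq k s) (w s))
    (γ : ℝ) (hγ : IsCFExp (gSeq k) γ) :
    ∀ᶠ m : ℕ in atTop, ∀ s, 1 ≤ s → s ≤ 2 * k → Even s →
      (if s = 2 * k then cfVal (topFin k m) + γ else cfVal (wFin k m s) + w s) ≤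
        cfVal (topFin k m) + γ := by
  filter_upwards with m
  intro s hs1 hs2k hse
  by_cases h : s = 2 * k
  · rw [if_pos h]
  · rw [if_neg h]
    obtain ⟨r, rfl⟩ := hse
    have hs2 : 2 ≤ r + r := by omega
    have hsle : r + r ≤ 2 * k - 1 := by omega
    have hks : 2 ≤ 2 * k - (r + r) := by omega
    have hwle : w (r + r) ≤ 7/4 :=
      le_of_tendsto (hw _ hs1 hsle)
        (Filter.eventually_atTop.2 ⟨2, fun n hn => w_conv_le k (r + r) hks n hn⟩)
    have hγge : 7/3 ≤ γ :=
      ge_of_tendsto hγ (Filter.eventually_atTop.2 ⟨1, fun n hn => g_conv_ge k n hn⟩)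
    have h1 := wFin_le k m (r + r) hs2
    have h2 := topFin_ge k m hk
    linarith
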